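/- Let v_1, …, v_d ∈ ℝ^d be linearly independent. Then the set V of all real symmetric positive definite d×d matrices Q such that the circumradius of the simplex conv{0, v_1, …, v_d} with respect to the inner product (x, y) = xᵀQy is at most 1 is a convex and bounded subset of the real vector space of symmetric d×d matrices. -/

import Mathlib

open Matrix

attribute [local instance] Matrix.normedAddCommGroup

private lemma quad_nonneg' {d : ℕ} {Q : Matrix (Fin d) (Fin d) ℝ} (hQ : Q.PosSemidef)
    (x : Fin d → ℝ) : 0 ≤ x ⬝ᵥ (Q *ᵥ x) := by simpa using (Matrix.posSemidef_iff_dotProduct_mulVec.mp hQ).2 x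

private lemma dot_symm' {d : ℕ} {Q : Matrix (Fin d) (Fin d) ℝ} (hQ : Q.IsSymm)
    (x y : Fin d → ℝ) : x ⬝ᵥ (Q *ᵥ y) = y ⬝ᵥ (Q *ᵥ x) := by
  rw [Matrix.dotProduct_mulVec, ← Matrix.mulVec_transpose, hQ.eq, dotProduct_comm]

private lemma quad_expand' {d : ℕ} (Q : Matrix (Fin d) (Fin d) ℝ) (x y : Fin d → ℝ) :
    (x - y) ⬝ᵥ (Q *ᵥ (x - y)) =
      x ⬝ᵥ (Q *ᵥ x) - x ⬝ᵥ (Q *ᵥ y) - y ⬝ᵥ (Q *ᵥ x) + y ⬝ᵥ (Q *ᵥ y) := by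
  simp [Matrix.mulVec_sub, dotProduct_sub, sub_dotProduct]
  ring

private lemma quad_expand2' {d : ℕ} (Q : Matrix (Fin d) (Fin d) ℝ) (x c : Fin d → ℝ) :
    (x - (c + c)) ⬝ᵥ (Q *ᵥ (x - (c + c))) =
      x ⬝ᵥ (Q *ᵥ x) - 2 * (x ⬝ᵥ (Q *ᵥ c)) - 2 * (c ⬝ᵥ (Q *ᵥ x)) + 4 * (c ⬝ᵥ (Q *ᵥ c)) := by
  simp [Matrix.mulVec_sub, Matrix.mulVec_add, dotProduct_sub, dotProduct_add,
    sub_dotProduct, add_dotProduct]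
  ring

private lemma quad_expand3' {d : ℕ} (Q : Matrix (Fin d) (Fin d) ℝ) (x y c : Fin d → ℝ) :
    (x + y - (c + c)) ⬝ᵥ (Q *ᵥ (x + y - (c + c))) =
      x ⬝ᵥ (Q *ᵥ x) + x ⬝ᵥ (Q *ᵥ y) + y ⬝ᵥ (Q *ᵥ x) + y ⬝ᵥ (Q *ᵥ y)
        - 2 * (x ⬝ᵥ (Q *ᵥ c)) - 2 * (c ⬝ᵥ (Q *ᵥ x))
        - 2 * (y ⬝ᵥ (Q *ᵥ c)) - 2 * (c ⬝ᵥ (Q *ᵥ y)) + 4 * (c ⬝ᵥ (Q *ᵥ c)) := by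
  simp [Matrix.mulVec_sub, Matrix.mulVec_add, dotProduct_sub, dotProduct_add,
    sub_dotProduct, add_dotProduct]
  ring

private lemma entry_eq' {d : ℕ} (v : Fin d → Fin d → ℝ) (Q : Matrix (Fin d) (Fin d) ℝ)
    (k l : Fin d) : (Matrix.of v * Q * (Matrix.of v)ᵀ) k l = v k ⬝ᵥ (Q *ᵥ v l) := by
  simp only [Matrix.mul_apply, dotProduct, Matrix.mulVec, Matrix.transpose_apply, Matrix.of_apply,
    Finset.sum_mul, Finset.mul_sum]
  rw [Finset.sum_comm]
  exact Finset.sum_congr rfl fun _ _ => Finset.sum_congr rfl fun _ _ => mul_assoc _ _ _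

/-- For linearly independent `v₁, …, v_d`, the set of symmetric positive definite matrices `Q`
for which the circumradius of the simplex `conv{0, v₁, …, v_d}` with respect to the inner
product `(x, y) = xᵀ Q y` is at most `1` is convex and bounded. -/
theorem convex_bounded_circumradius_le_one {d : ℕ}
    (v : Fin d → Fin d → ℝ) (hv : LinearIndependent ℝ v) :
    Convex ℝ {Q : Matrix (Fin d) (Fin d) ℝ | Q.IsSymm ∧ Q.PosDef ∧
        ∃ c : Fin d → ℝ,
          (∀ i, c ⬝ᵥ (Q *ᵥ c) = (v i - c) ⬝ᵥ (Q *ᵥ (v i - c))) ∧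
          Real.sqrt (c ⬝ᵥ (Q *ᵥ c)) ≤ 1} ∧
    Bornology.IsBounded {Q : Matrix (Fin d) (Fin d) ℝ | Q.IsSymm ∧ Q.PosDef ∧
        ∃ c : Fin d → ℝ,
          (∀ i, c ⬝ᵥ (Q *ᵥ c) = (v i - c) ⬝ᵥ (Q *ᵥ (v i - c))) ∧
          Real.sqrt (c ⬝ᵥ (Q *ᵥ c)) ≤ 1} := by
  have sq_le : ∀ r : ℝ, 0 ≤ r → Real.sqrt r ≤ 1 → r ≤ 1 := fun r hr h => by
    nlinarith [Real.sq_sqrt hr, Real.sqrt_nonneg r]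
  constructor
  · -- Convexity
    intro Q₀ h₀ Q₁ h₁ a b ha hb hab
    obtain ⟨hs₀, hp₀, c₀, hc₀, hr₀⟩ := h₀
    obtain ⟨hs₁, hp₁, c₁, hc₁, hr₁⟩ := h₁
    have hsymm : (a • Q₀ + b • Q₁).IsSymm := by
      rw [Matrix.IsSymm, Matrix.transpose_add, Matrix.transpose_smul, Matrix.transpose_smul,
        hs₀.eq, hs₁.eq]
    have hpd : (a • Q₀ + b • Q₁).PosDef := by
      refine Matrix.posDef_iff_dotProduct_mulVec.mpr ⟨?_, ?_⟩
      · have : ((a • Q₀ + b • Q₁)ᴴ : Matrix (Fin d) (Fin d) ℝ) = (a • Q₀ + b • Q₁)ᵀ := rfl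
        rw [Matrix.IsHermitian, this, hsymm.eq]
      · intro x hx
        have h0 := (Matrix.posDef_iff_dotProduct_mulVec.mp hp₀).2 hx
        have h1 := (Matrix.posDef_iff_dotProduct_mulVec.mp hp₁).2 hx
        simp only [star_trivial, Matrix.add_mulVec, Matrix.smul_mulVec, dotProduct_add,
          dotProduct_smul, smul_eq_mul] at h0 h1 ⊢
        rcases ha.eq_or_lt with h | h
        · have hb1 : b = 1 := by linarith
          rw [← h, hb1]; simpa using h1
        · nlinarith [mul_pos h h0, mul_nonneg hb h1.le]
    have hdet : IsUnit (a • Q₀ + b • Q₁).det := hpd.isUnit.map (Matrix.detMonoidHom)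
    set Q : Matrix (Fin d) (Fin d) ℝ := a • Q₀ + b • Q₁ with hQdef
    set c : Fin d → ℝ := Q⁻¹ *ᵥ (a • (Q₀ *ᵥ c₀) + b • (Q₁ *ᵥ c₁)) with hcdef
    have hQc : Q *ᵥ c = a • (Q₀ *ᵥ c₀) + b • (Q₁ *ᵥ c₁) := by
      rw [hcdef, Matrix.mulVec_mulVec, Matrix.mul_nonsing_inv _ hdet, Matrix.one_mulVec]
    -- linear functional identity
    have hlin : ∀ x : Fin d → ℝ,
        x ⬝ᵥ (Q *ᵥ c) = a * (x ⬝ᵥ (Q₀ *ᵥ c₀)) + b * (x ⬝ᵥ (Q₁ *ᵥ c₁)) := by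
      intro x
      rw [hQc]
      simp [dotProduct_add, dotProduct_smul, smul_eq_mul]
    have hquadQ : ∀ x y : Fin d → ℝ,
        x ⬝ᵥ (Q *ᵥ y) = a * (x ⬝ᵥ (Q₀ *ᵥ y)) + b * (x ⬝ᵥ (Q₁ *ᵥ y)) := by
      intro x y
      simp [hQdef, Matrix.add_mulVec, Matrix.smul_mulVec, dotProduct_add,
        dotProduct_smul, smul_eq_mul]
    -- equidistance conditions of Q₀, Q₁ in simplified form
    have h2 : ∀ i, 2 * (v i ⬝ᵥ (Q₀ *ᵥ c₀)) = v i ⬝ᵥ (Q₀ *ᵥ v i) := by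
      intro i
      have h := hc₀ i
      rw [quad_expand'] at h
      have hs := dot_symm' hs₀ (v i) c₀
      linarith
    have h3 : ∀ i, 2 * (v i ⬝ᵥ (Q₁ *ᵥ c₁)) = v i ⬝ᵥ (Q₁ *ᵥ v i) := by
      intro i
      have h := hc₁ i
      rw [quad_expand'] at h
      have hs := dot_symm' hs₁ (v i) c₁
      linarith
    refine ⟨hsymm, hpd, c, ?_, ?_⟩
    · intro i
      rw [quad_expand']
      have e1 := hlin (v i)
      have e2 := hquadQ (v i) (v i)
      have e3 := dot_symm' hsymm (v i) c
      have e4 := h2 i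
      have e5 := h3 i
      linear_combination (-1 : ℝ) * e2 + a * e4 + b * e5 + 2 * e1 - e3
    · -- radius bound
      have hval : c ⬝ᵥ (Q *ᵥ c) = a * (c ⬝ᵥ (Q₀ *ᵥ c₀)) + b * (c ⬝ᵥ (Q₁ *ᵥ c₁)) := hlin c
      have hval2 : c ⬝ᵥ (Q *ᵥ c) = a * (c ⬝ᵥ (Q₀ *ᵥ c)) + b * (c ⬝ᵥ (Q₁ *ᵥ c)) := hquadQ c c
      have r0le : c₀ ⬝ᵥ (Q₀ *ᵥ c₀) ≤ 1 := sq_le _ (quad_nonneg' hp₀.posSemidef c₀) hr₀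
      have r1le : c₁ ⬝ᵥ (Q₁ *ᵥ c₁) ≤ 1 := sq_le _ (quad_nonneg' hp₁.posSemidef c₁) hr₁
      have n0 : 0 ≤ (c - c₀) ⬝ᵥ (Q₀ *ᵥ (c - c₀)) := quad_nonneg' hp₀.posSemidef _
      have n1 : 0 ≤ (c - c₁) ⬝ᵥ (Q₁ *ᵥ (c - c₁)) := quad_nonneg' hp₁.posSemidef _
      rw [quad_expand'] at n0 n1
      have s0 := dot_symm' hs₀ c c₀
      have s1 := dot_symm' hs₁ c c₁
      have key0 : 2 * (c ⬝ᵥ (Q₀ *ᵥ c₀)) ≤ c ⬝ᵥ (Q₀ *ᵥ c) + c₀ ⬝ᵥ (Q₀ *ᵥ c₀) := by linarith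
      have key1 : 2 * (c ⬝ᵥ (Q₁ *ᵥ c₁)) ≤ c ⬝ᵥ (Q₁ *ᵥ c) + c₁ ⬝ᵥ (Q₁ *ᵥ c₁) := by linarith
      have hfin : c ⬝ᵥ (Q *ᵥ c) ≤ 1 := by
        nlinarith [mul_le_mul_of_nonneg_left key0 ha, mul_le_mul_of_nonneg_left key1 hb,
          mul_le_mul_of_nonneg_left r0le ha, mul_le_mul_of_nonneg_left r1le hb]
      calc Real.sqrt (c ⬝ᵥ (Q *ᵥ c)) ≤ Real.sqrt 1 := Real.sqrt_le_sqrt hfin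
        _ = 1 := Real.sqrt_one
  · -- Boundedness
    have hVu : IsUnit (Matrix.of v) := linearIndependent_rows_iff_isUnit.mp hv
    have hVd : IsUnit (Matrix.of v).det := (Matrix.isUnit_iff_isUnit_det _).mp hVu
    set V : Matrix (Fin d) (Fin d) ℝ := Matrix.of v with hVdef
    set W : Matrix (Fin d) (Fin d) ℝ := V⁻¹ with hWdef
    have hWV : W * V = 1 := Matrix.nonsing_inv_mul _ hVd
    have hVtWt : Vᵀ * Wᵀ = 1 := by rw [← Matrix.transpose_mul, hWV, Matrix.transpose_one]
    have hQeq : ∀ Q : Matrix (Fin d) (Fin d) ℝ, W * (V * Q * Vᵀ) * Wᵀ = Q := by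
      intro Q
      calc W * (V * Q * Vᵀ) * Wᵀ = W * (V * (Q * (Vᵀ * Wᵀ))) := by
            simp only [Matrix.mul_assoc]
        _ = Q := by rw [hVtWt, Matrix.mul_one, ← Matrix.mul_assoc, hWV, Matrix.one_mul]
    set T : ℝ := ∑ i, ∑ j, |W i j| with hTdef
    have hT : 0 ≤ T :=
      Finset.sum_nonneg fun i _ => Finset.sum_nonneg fun j _ => abs_nonneg _
    have hrow : ∀ i, (∑ k, |W i k|) ≤ T := fun i =>
      Finset.single_le_sum (f := fun i => ∑ j, |W i j|)
        (fun i _ => Finset.sum_nonneg fun j _ => abs_nonneg _) (Finset.mem_univ i)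
    rw [isBounded_iff_forall_norm_le]
    refine ⟨4 * T * T, ?_⟩
    rintro Q ⟨hs, hp, c, hc, hr⟩
    -- entrywise bound on V * Q * Vᵀ
    have hMb : ∀ k l, |v k ⬝ᵥ (Q *ᵥ v l)| ≤ 4 := by
      intro k l
      have γle : c ⬝ᵥ (Q *ᵥ c) ≤ 1 := sq_le _ (quad_nonneg' hp.posSemidef c) hr
      have g1 : 0 ≤ (v k - (c + c)) ⬝ᵥ (Q *ᵥ (v k - (c + c))) := quad_nonneg' hp.posSemidef _
      have g1' : 0 ≤ (v l - (c + c)) ⬝ᵥ (Q *ᵥ (v l - (c + c))) := quad_nonneg' hp.posSemidef _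
      have g2 : 0 ≤ (v k - v l) ⬝ᵥ (Q *ᵥ (v k - v l)) := quad_nonneg' hp.posSemidef _
      have g3 : 0 ≤ (v k + v l - (c + c)) ⬝ᵥ (Q *ᵥ (v k + v l - (c + c))) :=
        quad_nonneg' hp.posSemidef _
      rw [quad_expand2'] at g1 g1'
      rw [quad_expand'] at g2
      rw [quad_expand3'] at g3
      have ek := hc k
      have el := hc l
      rw [quad_expand'] at ek el
      have sk := dot_symm' hs (v k) c
      have sl := dot_symm' hs (v l) c
      have skl := dot_symm' hs (v k) (v l)
      have nk : 0 ≤ v k ⬝ᵥ (Q *ᵥ v k) := quad_nonneg' hp.posSemidef _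
      have nl : 0 ≤ v l ⬝ᵥ (Q *ᵥ v l) := quad_nonneg' hp.posSemidef _
      have nγ : 0 ≤ c ⬝ᵥ (Q *ᵥ c) := quad_nonneg' hp.posSemidef c
      rw [abs_le]
      constructor <;> linarith
    have hterm : ∀ i l, |(W * (V * Q * Vᵀ)) i l| ≤ 4 * T := by
      intro i l
      rw [Matrix.mul_apply]
      calc |∑ k, W i k * (V * Q * Vᵀ) k l| ≤ ∑ k, |W i k * (V * Q * Vᵀ) k l| :=
            Finset.abs_sum_le_sum_abs _ _
        _ ≤ ∑ k, |W i k| * 4 := by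
            refine Finset.sum_le_sum fun k _ => ?_
            rw [abs_mul]
            refine mul_le_mul_of_nonneg_left ?_ (abs_nonneg _)
            rw [hVdef]; rw [entry_eq']
            exact hMb k l
        _ = (∑ k, |W i k|) * 4 := (Finset.sum_mul _ _ _).symm
        _ ≤ 4 * T := by nlinarith [hrow i]
    have hQbd : ∀ i j, |Q i j| ≤ 4 * T * T := by
      intro i j
      have : Q i j = (W * (V * Q * Vᵀ) * Wᵀ) i j := by rw [hQeq]
      rw [this, Matrix.mul_apply]
      calc |∑ l, (W * (V * Q * Vᵀ)) i l * Wᵀ l j|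
          ≤ ∑ l, |(W * (V * Q * Vᵀ)) i l * Wᵀ l j| := Finset.abs_sum_le_sum_abs _ _
        _ ≤ ∑ l, (4 * T) * |W j l| := by
            refine Finset.sum_le_sum fun l _ => ?_
            rw [abs_mul, Matrix.transpose_apply]
            exact mul_le_mul_of_nonneg_right (hterm i l) (abs_nonneg _)
        _ = (4 * T) * ∑ l, |W j l| := (Finset.mul_sum _ _ _).symm
        _ ≤ 4 * T * T := by nlinarith [hrow j, hT]
    rw [Matrix.norm_le_iff (by positivity)]
    intro i j
    rw [Real.norm_eq_abs]
    exact hQbd i j
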